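/- In a matched cylindrical bracket sequence (a sequence of open and closed brackets arranged on a cycle ℤ_n, with the cylindrical pairing rule recursively pairing each open bracket to a closed bracket with no unpaired brackets between them), if the number of open brackets equals the number of closed brackets and they alternate perfectly or not, the number of unpaired open brackets equals max(0, #open − #closed) and the number of unpaired closed brackets equals max(0, #closed − #open). In particular, if #open = #closed then every bracket gets paired. -/
import Mathlib


/-- One step of the cylindrical bracket reduction: a cyclic word of brackets
(`true` = '(' and `false` = ')') reduces by deleting a cyclically adjacent pair
consisting of an open bracket immediately followed by a closed bracket. -/
def CycStep (l l' : List Bool) : Prop :=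
  ∃ k t, l.rotate k = true :: false :: t ∧ l' = t

lemma cycstep_count {l l' : List Bool} (h : CycStep l l') (b : Bool) :
    l.count b = l'.count b + 1 := by
  obtain ⟨k, t, hk, rfl⟩ := h
  have h1 : (l.rotate k).count b = l.count b := (l.rotate_perm k).count_eq b
  rw [hk] at h1
  cases b <;> simp [List.count_cons] at h1 ⊢ <;> omega

lemma exists_rot_head {l : List Bool} {a : Bool} (h : a ∈ l) :
    ∃ k t, l.rotate k = a :: t := by
  obtain ⟨p, q, rfl⟩ := List.append_of_mem h
  refine ⟨p.length, q ++ p, ?_⟩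
  rw [List.rotate_eq_drop_append_take (by simp)]
  simp

lemma findpair : ∀ (l : List Bool), (∃ t, l = true :: t) → false ∈ l →
    ∃ t1 t2, l = t1 ++ true :: false :: t2 := by
  intro l
  induction l with
  | nil => rintro ⟨t, ht⟩; simp at ht
  | cons a xs ih =>
    rintro ⟨t, ht⟩ hf
    have ha : a = true := by cases ht; rfl
    subst ha
    match xs, ih, hf with
    | [], _, hf => simp at hf
    | false :: t', _, _ => exact ⟨[], t', rfl⟩
    | true :: t', ih, hf =>
      have hf' : false ∈ true :: t' := by simpa using hf
      obtain ⟨t1, t2, h12⟩ := ih ⟨t', rfl⟩ hf'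
      exact ⟨true :: t1, t2, by rw [h12]; rfl⟩

lemma terminal_zero {m : List Bool} (hm : ∀ m', ¬ CycStep m m') :
    m.count true = 0 ∨ m.count false = 0 := by
  by_contra hc
  push_neg at hc
  have ht : true ∈ m := List.count_pos_iff.mp (Nat.pos_of_ne_zero hc.1)
  have hf : false ∈ m := List.count_pos_iff.mp (Nat.pos_of_ne_zero hc.2)
  obtain ⟨k, t, hk⟩ := exists_rot_head ht
  have hf' : false ∈ true :: t := by
    rw [← hk]; simpa using hf
  obtain ⟨t1, t2, h12⟩ := findpair (true :: t) ⟨t, rfl⟩ hf'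
  refine hm (t2 ++ t1) ⟨k + t1.length, t2 ++ t1, ?_, rfl⟩
  rw [← List.rotate_rotate, hk, h12,
    List.rotate_eq_drop_append_take (by simp)]
  simp

lemma rtg_count {l m : List Bool} (h : Relation.ReflTransGen CycStep l m) :
    m.count true + l.count false = l.count true + m.count false := by
  induction h with
  | refl => rfl
  | tail _ hstep ih =>
    have h1 := cycstep_count hstep true
    have h2 := cycstep_count hstep false
    omega

lemma count_len (m : List Bool) : m.count true + m.count false = m.length := by
  induction m with
  | nil => rfl
  | cons a xs ih => cases a <;> simp [List.count_cons] <;> omega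


/-- in the cylindrical bracket pairing on `ℤ_n`, after the recursive pairing
process terminates (no further pair can be matched), the number of unpaired open brackets
is `max(0, #open − #closed)` and the number of unpaired closed brackets is
`max(0, #closed − #open)` (truncated subtraction on `ℕ`). In particular, if
`#open = #closed` then every bracket is paired. -/
theorem cyclic_bracket_unpaired_count (l m : List Bool)
    (h : Relation.ReflTransGen CycStep l m) (hm : ∀ m', ¬ CycStep m m') :
    m.count true = l.count true - l.count false ∧
    m.count false = l.count false - l.count true ∧
    (l.count true = l.count false → m = []) := by
  have hinv := rtg_count h
  have hz := terminal_zero hm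
  have hlen := count_len m
  refine ⟨by omega, by omega, fun he => ?_⟩
  have : m.length = 0 := by omega
  exact List.eq_nil_of_length_eq_zero this
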